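/- For n ≥ 1 and t ≥ 1, the deviation of the averaged t-fold public-key state from the maximally mixed state has the explicit form: (1/2^{n−1}) Σ_{k ∈ Ω_n} (ρ_k^0)^{⊗t} − ((1/2^n)·1)^{⊗t} = (1/(2^{n−1}·2^{nt})) Σ_{k ∈ Ω_n} Σ_{i : Fin t → (Fin n → ZMod 2)} Σ_{x : Fin t → ZMod 2, x ≠ 0} E(i, fun s ↦ i s + (x s)•k), where 1 denotes the identity matrix. -/

import Mathlib

open Matrix Finset

/-- Hamming weight of a bit string. -/
def hammingW {n : ℕ} (ν : Fin n → ZMod 2) : ℕ :=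
  (Finset.univ.filter fun l => ν l = 1).card

/-- `Ω_n`: the bit strings of length `n` with odd Hamming weight. -/
def Omega (n : ℕ) : Finset (Fin n → ZMod 2) :=
  Finset.univ.filter fun k => Odd (hammingW k)

/-- The public-key state `ρ_k^0`. -/
noncomputable def rho0 (n : ℕ) (k : Fin n → ZMod 2) :
    Matrix (Fin n → ZMod 2) (Fin n → ZMod 2) ℂ :=
  (1 / 2 ^ n : ℂ) •
    ∑ i : Fin n → ZMod 2, ∑ x : ZMod 2, Matrix.single i (i + x • k) (1 : ℂ)

/-- Tensor product of a `t`-indexed family of matrices over index type `m`. -/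
def tensT {t : ℕ} {m : Type*} [Fintype m] (ρ : Fin t → Matrix m m ℂ) :
    Matrix (Fin t → m) (Fin t → m) ℂ :=
  Matrix.of fun u v => ∏ s, ρ s (u s) (v s)

lemma odd_hammingW_iff {n : ℕ} (k : Fin n → ZMod 2) :
    Odd (hammingW k) ↔ ∑ l, k l = 1 := by
  have h2 : ∀ a : ZMod 2, a ≠ 1 → a = 0 := by decide
  have h1 : ∑ l, k l = ((hammingW k : ℕ) : ZMod 2) := by
    rw [hammingW, Finset.card_eq_sum_ones, Nat.cast_sum]
    rw [← Finset.sum_filter_add_sum_filter_not Finset.univ (fun l => k l = 1)]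
    have : ∀ l ∈ Finset.univ.filter (fun l => ¬ k l = 1), k l = 0 := by
      intro l hl; simp at hl; exact h2 _ hl
    rw [Finset.sum_congr rfl this, Finset.sum_const, smul_zero, add_zero]
    refine Finset.sum_congr rfl ?_
    intro l hl; simp at hl; simp [hl]
  rw [h1, ZMod.natCast_eq_one_iff_odd]

lemma card_Omega (n : ℕ) (hn : 1 ≤ n) : (Omega n).card = 2 ^ (n - 1) := by
  classical
  set z : Fin n := ⟨0, hn⟩
  set f : (Fin n → ZMod 2) → (Fin n → ZMod 2) := fun k => Function.update k z (k z + 1) with hf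
  have hsum : ∀ k : Fin n → ZMod 2, ∑ l, f k l = (∑ l, k l) + 1 := by
    intro k
    rw [hf]
    rw [Finset.sum_update_of_mem (Finset.mem_univ z)]
    rw [Finset.sum_eq_add_sum_sdiff_singleton_of_mem (Finset.mem_univ z) k]
    ring
  have hpar : ∀ k, Odd (hammingW (f k)) ↔ ¬ Odd (hammingW k) := by
    intro k
    rw [odd_hammingW_iff, odd_hammingW_iff, hsum]
    have : ∀ a : ZMod 2, a + 1 = 1 ↔ ¬ a = 1 := by decide
    exact this _
  have hff : ∀ k, f (f k) = k := by
    intro k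
    have h2 : ∀ a : ZMod 2, a + 1 + 1 = a := by decide
    rw [hf]
    simp only [Function.update_self, Function.update_idem, h2, Function.update_eq_self]
  have hmaps : ∀ k ∈ Omega n, f k ∈ Finset.univ.filter fun k => ¬ Odd (hammingW k) := by
    intro k hk
    simp only [Omega, Finset.mem_filter, Finset.mem_univ, true_and] at hk ⊢
    exact fun h => (hpar k).mp h hk
  have hmaps' : ∀ k ∈ (Finset.univ.filter fun k : Fin n → ZMod 2 => ¬ Odd (hammingW k)),
      f k ∈ Omega n := by
    intro k hk
    simp only [Omega, Finset.mem_filter, Finset.mem_univ, true_and] at hk ⊢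
    exact (hpar k).mpr hk
  have hcard : (Omega n).card
      = (Finset.univ.filter fun k : Fin n → ZMod 2 => ¬ Odd (hammingW k)).card :=
    Finset.card_bij' (fun k _ => f k) (fun k _ => f k) hmaps hmaps'
      (fun k _ => hff k) (fun k _ => hff k)
  have htot := Finset.card_filter_add_card_filter_not
    (s := (Finset.univ : Finset (Fin n → ZMod 2))) (p := fun k => Odd (hammingW k))
  have huniv : (Finset.univ : Finset (Fin n → ZMod 2)).card = 2 ^ n := by
    simp [Finset.card_univ]
  have hpow : 2 ^ n = 2 ^ (n - 1) * 2 := by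
    conv_lhs => rw [show n = (n - 1) + 1 by omega]
    rw [pow_succ]
  rw [huniv] at htot
  have : (Omega n).card
      = (Finset.univ.filter fun k : Fin n → ZMod 2 => Odd (hammingW k)).card := rfl
  omega

lemma rho0_apply (n : ℕ) (k a b : Fin n → ZMod 2) :
    rho0 n k a b = (1 / 2 ^ n : ℂ) * ∑ x : ZMod 2, if a + x • k = b then 1 else 0 := by
  simp only [rho0, Matrix.smul_apply, Matrix.sum_apply, Matrix.single,
    Matrix.of_apply, smul_eq_mul]
  congr 1
  rw [Finset.sum_comm]
  refine Finset.sum_congr rfl fun x _ => ?_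
  simp [ite_and, Finset.sum_ite_eq']

/-- Explicit form of the deviation of the averaged `t`-fold public-key state from the
maximally mixed state. -/
theorem averaged_public_key_deviation (n t : ℕ) (hn : 1 ≤ n) (ht : 1 ≤ t) :
    ((1 / 2 ^ (n - 1) : ℂ) • ∑ k ∈ Omega n, tensT (fun _ : Fin t => rho0 n k))
        - tensT (fun _ : Fin t =>
            (1 / 2 ^ n : ℂ) • (1 : Matrix (Fin n → ZMod 2) (Fin n → ZMod 2) ℂ))
      = (1 / (2 ^ (n - 1) * 2 ^ (n * t)) : ℂ) •
          ∑ k ∈ Omega n, ∑ i : Fin t → (Fin n → ZMod 2),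
            ∑ x ∈ Finset.univ.filter (fun x : Fin t → ZMod 2 => x ≠ 0),
              Matrix.single i (fun s => i s + x s • k) (1 : ℂ) := by
  classical
  have h1 : ((2:ℂ) ^ (n - 1)) ≠ 0 := pow_ne_zero _ two_ne_zero
  have h2 : ((2:ℂ) ^ (n * t)) ≠ 0 := pow_ne_zero _ two_ne_zero
  ext u v
  simp only [Matrix.sub_apply, Matrix.smul_apply, Matrix.sum_apply, tensT, Matrix.of_apply,
    smul_eq_mul]
  -- the tensor power of rho0, entrywise
  have hrho : ∀ k : Fin n → ZMod 2,
      (∏ s : Fin t, rho0 n k (u s) (v s))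
        = (1 / 2 ^ (n*t) : ℂ) *
          ∑ p : Fin t → ZMod 2, (if (fun s => u s + p s • k) = v then (1:ℂ) else 0) := by
    intro k
    simp only [rho0_apply]
    rw [Finset.prod_mul_distrib, Finset.prod_const, Finset.prod_univ_sum]
    congr 1
    · rw [Finset.card_univ, Fintype.card_fin, div_pow, one_pow, pow_mul]
    · simp only [Fintype.piFinset_univ]
      refine Finset.sum_congr rfl fun p _ => ?_
      rw [Finset.prod_boole]
      congr 1
      simp [funext_iff]
  -- split off the p = 0 term
  have hsplit : ∀ k : Fin n → ZMod 2,
      (∑ p : Fin t → ZMod 2, (if (fun s => u s + p s • k) = v then (1:ℂ) else 0))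
        = (if u = v then (1:ℂ) else 0) +
          ∑ p ∈ Finset.univ.filter (fun p : Fin t → ZMod 2 => p ≠ 0),
            (if (fun s => u s + p s • k) = v then (1:ℂ) else 0) := by
    intro k
    rw [← Finset.sum_filter_add_sum_filter_not Finset.univ (fun p : Fin t → ZMod 2 => p = 0)]
    congr 1
    · rw [Finset.filter_eq']
      simp only [Finset.mem_univ, if_true, Finset.sum_singleton]
      simp [funext_iff]
  -- the maximally mixed tensor power, entrywise
  have hmix : (∏ s : Fin t,
        (1 / 2 ^ n : ℂ) * (1 : Matrix (Fin n → ZMod 2) (Fin n → ZMod 2) ℂ) (u s) (v s))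
      = (1 / 2 ^ (n*t) : ℂ) * (if u = v then (1:ℂ) else 0) := by
    simp only [Matrix.one_apply, mul_ite, mul_one, mul_zero]
    by_cases h : u = v
    · subst h
      simp [Finset.prod_const, div_pow, pow_mul]
    · obtain ⟨s, hs⟩ : ∃ s, u s ≠ v s := by
        by_contra hc
        push_neg at hc
        exact h (funext hc)
      rw [if_neg h, Finset.prod_eq_zero (Finset.mem_univ s) (by simp [hs])]
  -- the right-hand side, entrywise
  have hrhs : ∀ k : Fin n → ZMod 2,
      (∑ i : Fin t → (Fin n → ZMod 2),
          ∑ x ∈ Finset.univ.filter (fun x : Fin t → ZMod 2 => x ≠ 0),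
            Matrix.single i (fun s => i s + x s • k) (1 : ℂ) u v)
        = ∑ x ∈ Finset.univ.filter (fun x : Fin t → ZMod 2 => x ≠ 0),
            (if (fun s => u s + x s • k) = v then (1:ℂ) else 0) := by
    intro k
    rw [Finset.sum_comm]
    refine Finset.sum_congr rfl fun x _ => ?_
    simp [Matrix.single, ite_and, Finset.sum_ite_eq']
  simp only [hrho, hsplit, hmix, hrhs]
  rw [Finset.sum_congr rfl (fun k _ => mul_add (1 / 2 ^ (n*t) : ℂ) _ _),
    Finset.sum_add_distrib, Finset.sum_const, card_Omega n hn]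
  set δ := (if u = v then (1:ℂ) else 0) with hδ
  set T : (Fin n → ZMod 2) → ℂ := fun k =>
    ∑ p ∈ Finset.univ.filter (fun p : Fin t → ZMod 2 => p ≠ 0),
      (if (fun s => u s + p s • k) = v then (1:ℂ) else 0) with hT
  have hterm : ∀ k ∈ Omega n,
      (1 / 2 ^ (n-1) : ℂ) * (1 / 2 ^ (n*t) * T k) = 1 / (2 ^ (n-1) * 2 ^ (n*t)) * T k := by
    intro k _
    field_simp
  have hc : (1 / 2 ^ (n-1) : ℂ) * ((2:ℕ) ^ (n-1) • (1 / 2 ^ (n*t) * δ)) = 1 / 2 ^ (n*t) * δ := by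
    rw [nsmul_eq_mul]
    push_cast
    field_simp
  rw [mul_add, Finset.mul_sum, Finset.sum_congr rfl hterm]
  rw [show ((2:ℕ) ^ (n-1) : ℕ) • ((1:ℂ) / 2 ^ (n*t) * δ) = (2:ℕ) ^ (n-1) • ((1:ℂ) / 2 ^ (n*t) * δ) from rfl]
  rw [hc]
  rw [add_sub_cancel_left]
  exact (Finset.mul_sum _ _ _).symm
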